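/- The extended map Z from pairs (phylogeny, tip-partition) to transmission trees on A is not injective when some host in the transmission tree has at least two children: two different orderings of the children in the caterpillar construction yield distinct partitioned phylogenies with the same image transmission tree. -/

import Mathlib

/-- A rooted binary phylogenetic tree on node set `V` with tips labelled bijectively
by the host set `A`.  `parent v = none` iff `v` is the root; `depth` witnesses
acyclicity; every tip is childless and every internal (non-tip) node has exactly
two children. -/
structure PhyloTree (V A : Type) where
  parent : V → Option V
  root : V
  depth : V → ℕ
  parent_root : parent root = none
  root_unique : ∀ v, parent v = none → v = root
  depth_lt : ∀ u v, parent u = some v → depth v < depth u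
  tip : A → V
  tip_inj : Function.Injective tip
  tip_no_child : ∀ (a : A) (u : V), parent u ≠ some (tip a)
  binary : ∀ v : V, (¬ ∃ a, tip a = v) → {u : V | parent u = some v}.ncard = 2

/-- `T.anc u v` : `u` is an ancestor of `v` in `T` (following parents from `v`
reaches `u`; reflexive). -/
def PhyloTree.anc {V A : Type} (T : PhyloTree V A) (u v : V) : Prop :=
  Relation.ReflTransGen (fun x y => T.parent x = some y) v u

/-- A tip-partition of `T`: each node gets a label `δ`, the block of a label is
its fiber, each block is a connected subtree (witnessed by its root `blockRoot`,
an ancestor of every node of the block such that every node on the tree path from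
it to a block member is in the block), and the block of label `a` contains the
tip labelled `a` (hence exactly one tip, by `δ_tip`). -/
structure TipPartition {V A : Type} (T : PhyloTree V A) where
  δ : V → A
  δ_tip : ∀ a, δ (T.tip a) = a
  blockRoot : A → V
  blockRoot_label : ∀ a, δ (blockRoot a) = a
  blockRoot_anc : ∀ u, T.anc (blockRoot (δ u)) u
  block_connected : ∀ u w, T.anc (blockRoot (δ u)) w → T.anc w u → δ w = δ u

/-- The transmission (infector) map `z(P)` induced by a tip-partition: the
infector of host `a` is the label of the block containing the parent of the root
of `a`'s block, or `none` if that root is the root of `T`. -/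
def infector {V A : Type} (T : PhyloTree V A) (P : TipPartition T) (a : A) : Option A :=
  (T.parent (P.blockRoot a)).map P.δ

/-- `f` is a transmission tree (a rooted labelled tree on `A`, viewed as an
infector map): there is a unique root (host with no infector), and iterating the
infector map from any host reaches the root (equivalently `none`). -/
def IsTransmissionTree {A : Type} (f : A → Option A) : Prop :=
  (∃! r, f r = none) ∧ ∀ a, ∃ k, (fun o => Option.bind o f)^[k] (some a) = none

set_option linter.unusedSectionVars false
set_option linter.unusedVariables false

open Classical

noncomputable section AuxZ

variable {A : Type} [Fintype A]

/-- children set of a host -/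
def chS (f : A → Option A) (x : A) : Set A := {b | f b = some x}

lemma mem_chS {f : A → Option A} {b x : A} : b ∈ chS f x ↔ f b = some x := Iff.rfl

lemma mem_chS_ne_none {f : A → Option A} {b x : A} (h : b ∈ chS f x) : f b ≠ none := by
  rw [mem_chS] at h; simp [h]

lemma exists_maxOn (ι : A → ℕ) {S : Set A} (h : S.Nonempty) :
    ∃ b, b ∈ S ∧ ∀ c ∈ S, ι c ≤ ι b := by
  obtain ⟨s, hs⟩ := h
  have hfin : S.Finite := Set.toFinite S
  obtain ⟨b, hb, hmax⟩ := hfin.toFinset.exists_max_image ι ⟨s, hfin.mem_toFinset.mpr hs⟩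
  exact ⟨b, hfin.mem_toFinset.mp hb, fun c hc => hmax c (hfin.mem_toFinset.mpr hc)⟩

lemma exists_minOn (ι : A → ℕ) {S : Set A} (h : S.Nonempty) :
    ∃ b, b ∈ S ∧ ∀ c ∈ S, ι b ≤ ι c := by
  obtain ⟨s, hs⟩ := h
  have hfin : S.Finite := Set.toFinite S
  obtain ⟨b, hb, hmin⟩ := hfin.toFinset.exists_min_image ι ⟨s, hfin.mem_toFinset.mpr hs⟩
  exact ⟨b, hfin.mem_toFinset.mp hb, fun c hc => hmin c (hfin.mem_toFinset.mpr hc)⟩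

def pmax (ι : A → ℕ) {S : Set A} (h : S.Nonempty) : A := (exists_maxOn ι h).choose
def pmin (ι : A → ℕ) {S : Set A} (h : S.Nonempty) : A := (exists_minOn ι h).choose

lemma pmax_mem (ι : A → ℕ) {S : Set A} (h : S.Nonempty) : pmax ι h ∈ S :=
  (exists_maxOn ι h).choose_spec.1
lemma pmax_max (ι : A → ℕ) {S : Set A} (h : S.Nonempty) : ∀ c ∈ S, ι c ≤ ι (pmax ι h) :=
  (exists_maxOn ι h).choose_spec.2
lemma pmin_mem (ι : A → ℕ) {S : Set A} (h : S.Nonempty) : pmin ι h ∈ S :=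
  (exists_minOn ι h).choose_spec.1
lemma pmin_min (ι : A → ℕ) {S : Set A} (h : S.Nonempty) : ∀ c ∈ S, ι (pmin ι h) ≤ ι c :=
  (exists_minOn ι h).choose_spec.2

/-- vertex set: tips (left) and spine nodes (right), one for each non-root host -/
abbrev Vt (f : A → Option A) : Type := A ⊕ {b : A // f b ≠ none}

def σv (f : A → Option A) (b : A) (hb : f b ≠ none) : Vt f := Sum.inr ⟨b, hb⟩

/-- the host of a spine node (value of `f b`) -/
def fval (f : A → Option A) (b : A) (hb : f b ≠ none) : A :=
  (f b).get (Option.ne_none_iff_isSome.mp hb)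

lemma f_fval {f : A → Option A} {b : A} (hb : f b ≠ none) : f b = some (fval f b hb) :=
  (Option.some_get _).symm

lemma fval_eq {f : A → Option A} {b x : A} (hb : f b ≠ none) (h : f b = some x) :
    fval f b hb = x := by
  have := f_fval hb; rw [h] at this; exact (Option.some_inj.mp this).symm

lemma fval_mem_chS {f : A → Option A} {b : A} (hb : f b ≠ none) :
    b ∈ chS f (fval f b hb) := f_fval hb

/-- siblings of `b` strictly earlier in the order `ι` -/
def sib (f : A → Option A) (ι : A → ℕ) (b x : A) : Set A :=
  {c | f c = some x ∧ ι c < ι b}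

/-- the parent map of the caterpillar-expansion tree, for child ordering `ι` -/
def par (f : A → Option A) (ι : A → ℕ) : Vt f → Option (Vt f)
  | Sum.inl b =>
    if h : (chS f b).Nonempty then
      some (σv f (pmax ι h) (mem_chS_ne_none (pmax_mem ι h)))
    else if h2 : f b = none then none
    else some (σv f b h2)
  | Sum.inr ⟨b, hb⟩ =>
    if h : (sib f ι b (fval f b hb)).Nonempty then
      some (σv f (pmax ι h) (mem_chS_ne_none (pmax_mem ι h).1))
    else if h2 : f (fval f b hb) = none then none
    else some (σv f (fval f b hb) h2)

/-- the label of a vertex -/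
def lab (f : A → Option A) : Vt f → A
  | Sum.inl b => b
  | Sum.inr ⟨b, hb⟩ => fval f b hb

/-- depth function -/
def dep (f : A → Option A) (hgt : A → ℕ) (ι : A → ℕ) : Vt f → ℕ
  | Sum.inl b => (Fintype.card A + 1) * (hgt b + 1) + Fintype.card A
  | Sum.inr ⟨b, _⟩ => (Fintype.card A + 1) * hgt b + ι b

def hgt (f : A → Option A) (a : A) : ℕ :=
  if h : ∃ k, (fun o => Option.bind o f)^[k] (some a) = none then Nat.find h else 0

lemma hgt_step {f : A → Option A} (hf : ∀ a, ∃ k, (fun o => Option.bind o f)^[k] (some a) = none)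
    {b c : A} (h : f b = some c) : hgt f b = hgt f c + 1 := by
  have hb := hf b
  have hc := hf c
  have key : ∀ k, (fun o => Option.bind o f)^[k + 1] (some b) = (fun o => Option.bind o f)^[k] (some c) := by
    intro k
    rw [Function.iterate_succ_apply]
    simp [h]
  rw [hgt, hgt, dif_pos hb, dif_pos hc]
  have h1 : Nat.find hb ≠ 0 := by
    intro h0
    have := Nat.find_spec hb
    rw [h0] at this
    simp at this
  obtain ⟨k, hk⟩ := Nat.exists_eq_succ_of_ne_zero h1
  rw [hk]
  congr 1
  have hspec := Nat.find_spec hb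
  rw [hk, key] at hspec
  have h2 : Nat.find hc ≤ k := Nat.find_le hspec
  have h3 : k ≤ Nat.find hc := by
    by_contra hlt
    push_neg at hlt
    have := Nat.find_spec hc
    have hkk : k + 1 ≤ Nat.find hb := by rw [hk]
    have := Nat.find_min hb (show Nat.find hc + 1 < Nat.find hb by omega)
    rw [key] at this
    exact this (Nat.find_spec hc)
  omega

/-- ancestor relation wrt a parent map -/
def ancp (f : A → Option A) (ι : A → ℕ) (u v : Vt f) : Prop :=
  Relation.ReflTransGen (fun x y => par f ι x = some y) v u

lemma ancp_refl {f : A → Option A} {ι : A → ℕ} (u : Vt f) : ancp f ι u u :=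
  Relation.ReflTransGen.refl

lemma ancp_trans {f : A → Option A} {ι : A → ℕ} {u v w : Vt f}
    (h1 : ancp f ι u v) (h2 : ancp f ι v w) : ancp f ι u w :=
  Relation.ReflTransGen.trans h2 h1


/-- depth decreases from child to parent -/
lemma dep_lt {f : A → Option A} {ι : A → ℕ}
    (hf : ∀ a, ∃ k, (fun o => Option.bind o f)^[k] (some a) = none)
    (hι : ∀ b, ι b < Fintype.card A)
    {u v : Vt f} (h : par f ι u = some v) :
    dep f (hgt f) ι v < dep f (hgt f) ι u := by
  set n := Fintype.card A with hn
  match u with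
  | Sum.inl b =>
    rw [par] at h
    split_ifs at h with h1 h2
    · -- v = σ (pmax over chS b)
      rw [Option.some_inj] at h
      subst h
      have hmem := pmax_mem ι h1
      rw [mem_chS] at hmem
      have hh : hgt f (pmax ι h1) = hgt f b + 1 := hgt_step hf hmem
      simp only [dep, σv, hh]
      have := hι (pmax ι h1)
      omega
    · rw [Option.some_inj] at h
      subst h
      simp only [dep, σv]
      have := hι b
      nlinarith [hgt f b]
  | Sum.inr ⟨b, hb⟩ =>
    rw [par] at h
    split_ifs at h with h1 h2
    · rw [Option.some_inj] at h
      subst h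
      have hmem := pmax_mem ι h1
      obtain ⟨hm1, hm2⟩ := hmem
      have hb' : f b = some (fval f b hb) := f_fval hb
      have e1 : hgt f (pmax ι h1) = hgt f (fval f b hb) + 1 := hgt_step hf hm1
      have e2 : hgt f b = hgt f (fval f b hb) + 1 := hgt_step hf hb'
      simp only [dep, σv, e1, e2]
      omega
    · rw [Option.some_inj] at h
      subst h
      have hb' : f b = some (fval f b hb) := f_fval hb
      have e2 : hgt f b = hgt f (fval f b hb) + 1 := hgt_step hf hb'
      simp only [dep, σv, e2]
      have := hι (fval f b hb)
      nlinarith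

section Order
variable {f : A → Option A} {ι : A → ℕ}

lemma anc_dep_le (hf : ∀ a, ∃ k, (fun o => Option.bind o f)^[k] (some a) = none)
    (hι : ∀ b, ι b < Fintype.card A) {u v : Vt f} (h : ancp f ι u v) :
    dep f (hgt f) ι u ≤ dep f (hgt f) ι v := by
  induction h with
  | refl => exact le_refl _
  | tail h1 h2 ih => exact le_trans (le_of_lt (dep_lt hf hι h2)) ih

lemma anc_antisymm (hf : ∀ a, ∃ k, (fun o => Option.bind o f)^[k] (some a) = none)
    (hι : ∀ b, ι b < Fintype.card A) {u v : Vt f}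
    (h1 : ancp f ι u v) (h2 : ancp f ι v u) : u = v := by
  rcases Relation.ReflTransGen.cases_head h1 with h | ⟨c, hc1, hc2⟩
  · exact h.symm
  · exfalso
    have l1 : dep f (hgt f) ι u ≤ dep f (hgt f) ι c := anc_dep_le hf hι hc2
    have l2 : dep f (hgt f) ι c < dep f (hgt f) ι v := dep_lt hf hι hc1
    have l3 : dep f (hgt f) ι v ≤ dep f (hgt f) ι u := anc_dep_le hf hι h2
    omega

/-- two ancestors of the same node are comparable -/
lemma anc_total {x y z : Vt f} (h1 : ancp f ι x z) (h2 : ancp f ι y z) :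
    ancp f ι x y ∨ ancp f ι y x := by
  unfold ancp at *
  induction h1 with
  | refl => exact Or.inr h2
  | @tail b x' hzb hbx ih =>
    rcases ih with hby | hyb
    · exact Or.inl (hby.tail hbx)
    · rcases Relation.ReflTransGen.cases_head hyb with h | ⟨c, hc1, hc2⟩
      · exact Or.inl (h ▸ Relation.ReflTransGen.single hbx)
      · rw [hbx] at hc1
        rw [Option.some_inj] at hc1
        subst hc1
        exact Or.inr hc2

/-- distinct children of a node have disjoint subtrees -/
lemma anc_sibling (hf : ∀ a, ∃ k, (fun o => Option.bind o f)^[k] (some a) = none)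
    (hι : ∀ b, ι b < Fintype.card A) {u1 u2 p : Vt f}
    (hp1 : par f ι u1 = some p) (hp2 : par f ι u2 = some p)
    (hne : u1 ≠ u2) : ¬ ancp f ι u1 u2 := by
  intro h
  rcases Relation.ReflTransGen.cases_head h with h' | ⟨c, hc1, hc2⟩
  · exact hne h'.symm
  · rw [hp2] at hc1
    rw [Option.some_inj] at hc1
    subst hc1
    have l1 : dep f (hgt f) ι u1 ≤ dep f (hgt f) ι p := anc_dep_le hf hι hc2
    have l2 : dep f (hgt f) ι p < dep f (hgt f) ι u1 := dep_lt hf hι hp1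
    omega

end Order

section Lab
variable {f : A → Option A} {ι : A → ℕ}

lemma lab_step {u p : Vt f} (h : par f ι u = some p) :
    lab f p = lab f u ∨ f (lab f u) = some (lab f p) := by
  match u with
  | Sum.inl b =>
    rw [par] at h
    split_ifs at h with h1 h2
    · rw [Option.some_inj] at h
      subst h
      left
      simp only [lab, σv]
      exact fval_eq _ (pmax_mem ι h1)
    · rw [Option.some_inj] at h
      subst h
      right
      simp only [lab, σv]
      exact f_fval h2
  | Sum.inr ⟨b, hb⟩ =>
    rw [par] at h
    split_ifs at h with h1 h2
    · rw [Option.some_inj] at h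
      subst h
      left
      simp only [lab, σv]
      exact fval_eq _ (pmax_mem ι h1).1
    · rw [Option.some_inj] at h
      subst h
      right
      simp only [lab, σv]
      exact f_fval h2

/-- f-ancestor relation on hosts -/
def ancf (f : A → Option A) (x y : A) : Prop :=
  Relation.ReflTransGen (fun p q => f p = some q) y x

lemma lab_anc {u v : Vt f} (h : ancp f ι u v) : ancf f (lab f u) (lab f v) := by
  unfold ancp at h
  unfold ancf
  induction h with
  | refl => exact Relation.ReflTransGen.refl
  | @tail b c _ hbc ih =>
    rcases lab_step hbc with he | he
    · rwa [he]
    · exact ih.tail he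

lemma hgt_ancf (hf : ∀ a, ∃ k, (fun o => Option.bind o f)^[k] (some a) = none)
    {x y : A} (h : ancf f x y) : hgt f x ≤ hgt f y := by
  unfold ancf at h
  induction h with
  | refl => exact le_refl _
  | tail _ hstep ih =>
    have := hgt_step hf hstep
    omega

lemma not_ancf_child (hf : ∀ a, ∃ k, (fun o => Option.bind o f)^[k] (some a) = none)
    {x y : A} (hxy : f x = some y) (h : ancf f x y) : False := by
  have h1 := hgt_ancf hf h
  have h2 := hgt_step hf hxy
  omega

end Lab

section ParLemmas
variable {f : A → Option A} {ι : A → ℕ}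

lemma par_inl_pos {b : A} (h : (chS f b).Nonempty) :
    par f ι (Sum.inl b) = some (σv f (pmax ι h) (mem_chS_ne_none (pmax_mem ι h))) := by
  simp only [par]
  rw [dif_pos h]

lemma par_inl_neg {b : A} (h : ¬ (chS f b).Nonempty) (h2 : f b ≠ none) :
    par f ι (Sum.inl b) = some (σv f b h2) := by
  simp only [par]
  rw [dif_neg h, dif_neg h2]

lemma par_inl_root {b : A} (h : ¬ (chS f b).Nonempty) (h2 : f b = none) :
    par f ι (Sum.inl b) = none := by
  simp only [par]
  rw [dif_neg h, dif_pos h2]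

lemma par_inr_pos {b x : A} (hb : f b ≠ none) (hbx : f b = some x)
    (h : (sib f ι b x).Nonempty) :
    par f ι (Sum.inr ⟨b, hb⟩ : Vt f) =
      some (σv f (pmax ι h) (mem_chS_ne_none (pmax_mem ι h).1)) := by
  have he : fval f b hb = x := fval_eq hb hbx
  subst he
  simp only [par]
  rw [dif_pos h]

lemma par_inr_neg {b x : A} (hb : f b ≠ none) (hbx : f b = some x)
    (h : ¬ (sib f ι b x).Nonempty) (h2 : f x ≠ none) :
    par f ι (Sum.inr ⟨b, hb⟩ : Vt f) = some (σv f x h2) := by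
  have he : fval f b hb = x := fval_eq hb hbx
  subst he
  simp only [par]
  rw [dif_neg h, dif_neg h2]

lemma par_inr_root {b x : A} (hb : f b ≠ none) (hbx : f b = some x)
    (h : ¬ (sib f ι b x).Nonempty) (h2 : f x = none) :
    par f ι (Sum.inr ⟨b, hb⟩ : Vt f) = none := by
  have he : fval f b hb = x := fval_eq hb hbx
  subst he
  simp only [par]
  rw [dif_neg h, dif_pos h2]

end ParLemmas

section Spine
variable {f : A → Option A} {ι : A → ℕ}

/-- the top of the spine of `y` is an ancestor of every spine node of `y` -/
lemma spine_anc (hinj : Function.Injective ι) {y : A} (hy : (chS f y).Nonempty) :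
    ∀ (c : A) (hc : f c = some y),
      ancp f ι (σv f (pmin ι hy) (mem_chS_ne_none (pmin_mem ι hy)))
        (σv f c (mem_chS_ne_none hc)) := by
  suffices key : ∀ (n : ℕ) (c : A), ι c = n → ∀ (hc : f c = some y),
      ancp f ι (σv f (pmin ι hy) (mem_chS_ne_none (pmin_mem ι hy)))
        (σv f c (mem_chS_ne_none hc)) by
    intro c hc
    exact key (ι c) c rfl hc
  intro n
  induction n using Nat.strong_induction_on with
  | _ n ih =>
  intro c hn hc
  subst hn
  by_cases hcp : c = pmin ι hy
  · subst hcp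
    exact ancp_refl _
  · have hsib : (sib f ι c y).Nonempty := by
      refine ⟨pmin ι hy, pmin_mem ι hy, ?_⟩
      have h1 := pmin_min ι hy c hc
      rcases lt_or_eq_of_le h1 with h | h
      · exact h
      · exact absurd (hinj h) (Ne.symm hcp)
    have hpar := par_inr_pos (ι := ι) (mem_chS_ne_none hc) hc hsib
    have hmem := pmax_mem ι hsib
    refine Relation.ReflTransGen.head hpar ?_
    exact ih (ι (pmax ι hsib)) hmem.2 (pmax ι hsib) rfl hmem.1

/-- blockRoot candidate -/
def brt (f : A → Option A) (ι : A → ℕ) (a : A) : Vt f :=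
  if h : (chS f a).Nonempty then σv f (pmin ι h) (mem_chS_ne_none (pmin_mem ι h))
  else Sum.inl a

lemma lab_brt (a : A) : lab f (brt f ι a) = a := by
  rw [brt]
  split_ifs with h
  · simp only [σv, lab]
    exact fval_eq _ (pmin_mem ι h)
  · rfl

lemma brt_anc (hinj : Function.Injective ι) (u : Vt f) :
    ancp f ι (brt f ι (lab f u)) u := by
  match u with
  | Sum.inl b =>
    simp only [lab]
    by_cases h : (chS f b).Nonempty
    · rw [brt, dif_pos h]
      have hpar := par_inl_pos (ι := ι) h
      refine Relation.ReflTransGen.head hpar ?_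
      exact spine_anc hinj h (pmax ι h) (pmax_mem ι h)
    · rw [brt, dif_neg h]
      exact ancp_refl _
  | Sum.inr ⟨b, hb⟩ =>
    simp only [lab]
    have hc : f b = some (fval f b hb) := f_fval hb
    have h : (chS f (fval f b hb)).Nonempty := ⟨b, hc⟩
    rw [brt, dif_pos h]
    exact spine_anc hinj h b hc

end Spine

section Block
variable {f : A → Option A} {ι : A → ℕ}

/-- a non-blockRoot member of a block has its parent in the same block -/
lemma parent_block (hinj : Function.Injective ι) {u : Vt f} {a : A} (hu : lab f u = a)
    (hne : u ≠ brt f ι a) : ∃ p, par f ι u = some p ∧ lab f p = a := by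
  match u with
  | Sum.inl b =>
    simp only [lab] at hu
    subst hu
    have h : (chS f b).Nonempty := by
      by_contra h
      exact hne (by rw [brt, dif_neg h])
    refine ⟨_, par_inl_pos h, ?_⟩
    simp only [σv, lab]
    exact fval_eq _ (pmax_mem ι h)
  | Sum.inr ⟨b, hb⟩ =>
    simp only [lab] at hu
    have hc : f b = some a := by rw [← hu]; exact f_fval hb
    have hch : (chS f a).Nonempty := ⟨b, hc⟩
    by_cases hsib : (sib f ι b a).Nonempty
    · refine ⟨_, par_inr_pos hb hc hsib, ?_⟩
      simp only [σv, lab]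
      exact fval_eq _ (pmax_mem ι hsib).1
    · exfalso
      apply hne
      rw [brt, dif_pos hch]
      have : b = pmin ι hch := by
        have h1 := pmin_min ι hch b hc
        have h2 : ¬ ι (pmin ι hch) < ι b := fun hlt => hsib ⟨pmin ι hch, pmin_mem ι hch, hlt⟩
        exact hinj (le_antisymm (not_lt.mp h2) h1)
      simp only [σv]
      congr 1
      exact Subtype.ext this
  
lemma block_connected' (hf : ∀ a, ∃ k, (fun o => Option.bind o f)^[k] (some a) = none)
    (hι : ∀ b, ι b < Fintype.card A) (hinj : Function.Injective ι)
    {w : Vt f} {a : A} (hw : ancp f ι (brt f ι a) w) :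
    ∀ u, lab f u = a → ancp f ι w u → lab f w = a := by
  suffices key : ∀ (n : ℕ) (u : Vt f), dep f (hgt f) ι u = n → lab f u = a →
      ancp f ι w u → lab f w = a by
    intro u; exact key _ u rfl
  intro n
  induction n using Nat.strong_induction_on with
  | _ n ih =>
  intro u hn hu hwu
  by_cases hub : u = brt f ι a
  · subst hub
    have := anc_antisymm hf hι hwu hw
    rw [this]
    exact lab_brt a
  · obtain ⟨p, hp, hlabp⟩ := parent_block hinj hu hub
    rcases Relation.ReflTransGen.cases_head hwu with h | ⟨c, hc1, hc2⟩
    · exact h ▸ hu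
    · rw [hp] at hc1
      rw [Option.some_inj] at hc1
      subst hc1
      exact ih (dep f (hgt f) ι p) (hn ▸ dep_lt hf hι hp) p rfl hlabp hc2

end Block

/-- siblings of `b` strictly later in the order -/
def siba (f : A → Option A) (ι : A → ℕ) (b x : A) : Set A :=
  {c | f c = some x ∧ ι b < ι c}

section Binary
variable {f : A → Option A} {ι : A → ℕ}

lemma fb_ne_self (hf : ∀ a, ∃ k, (fun o => Option.bind o f)^[k] (some a) = none)
    {b x : A} (hbx : f b = some x) : b ≠ x := by
  intro h
  subst h
  have := hgt_step hf hbx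
  omega

lemma brt_par {b : A} (hb : f b ≠ none) :
    par f ι (brt f ι b) = some (Sum.inr ⟨b, hb⟩ : Vt f) := by
  rw [brt]
  split_ifs with h
  · have hm : f (pmin ι h) = some b := pmin_mem ι h
    have hsib : ¬ (sib f ι (pmin ι h) b).Nonempty := by
      rintro ⟨c, hc1, hc2⟩
      exact absurd (pmin_min ι h c hc1) (not_le.mpr hc2)
    exact par_inr_neg _ hm hsib hb
  · exact par_inl_neg h hb

/-- the second child of a spine node -/
def sc (f : A → Option A) (ι : A → ℕ) (b x : A) : Vt f :=
  if h : (siba f ι b x).Nonempty then σv f (pmin ι h) (mem_chS_ne_none (pmin_mem ι h).1)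
  else Sum.inl x

lemma sc_par (hinj : Function.Injective ι) {b x : A} (hb : f b ≠ none) (hbx : f b = some x) :
    par f ι (sc f ι b x) = some (Sum.inr ⟨b, hb⟩ : Vt f) := by
  rw [sc]
  split_ifs with h
  · have hcm : f (pmin ι h) = some x := (pmin_mem ι h).1
    have hbc : ι b < ι (pmin ι h) := (pmin_mem ι h).2
    have hsib : (sib f ι (pmin ι h) x).Nonempty := ⟨b, hbx, hbc⟩
    simp only [σv]
    rw [par_inr_pos _ hcm hsib]
    have hpm := pmax_mem ι hsib
    have hble : ι b ≤ ι (pmax ι hsib) := pmax_max ι hsib b ⟨hbx, hbc⟩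
    have : pmax ι hsib = b := by
      rcases lt_or_eq_of_le hble with hlt | heq
      · exfalso
        have : pmax ι hsib ∈ siba f ι b x := ⟨hpm.1, hlt⟩
        exact absurd (pmin_min ι h _ this) (not_le.mpr hpm.2)
      · exact (hinj heq).symm
    simp only [σv, this]
  · have hch : (chS f x).Nonempty := ⟨b, hbx⟩
    rw [par_inl_pos hch]
    have hble : ι b ≤ ι (pmax ι hch) := pmax_max ι hch b hbx
    have : pmax ι hch = b := by
      rcases lt_or_eq_of_le hble with hlt | heq
      · exact absurd ⟨pmax_mem ι hch, hlt⟩ (fun hmem => h ⟨_, hmem⟩)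
      · exact (hinj heq).symm
    simp only [σv, this]

lemma brt_ne_sc (hf : ∀ a, ∃ k, (fun o => Option.bind o f)^[k] (some a) = none)
    {b x : A} (hbx : f b = some x) : brt f ι b ≠ sc f ι b x := by
  have hbnex : b ≠ x := fb_ne_self hf hbx
  rw [brt, sc]
  split_ifs with h1 h2 h2
  · simp only [σv]
    intro he
    have hv : pmin ι h1 = pmin ι h2 := Subtype.ext_iff.mp (Sum.inr_injective he)
    have e1 : f (pmin ι h1) = some b := pmin_mem ι h1
    have e2 : f (pmin ι h2) = some x := (pmin_mem ι h2).1
    rw [hv, e2] at e1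
    exact hbnex (Option.some_inj.mp e1).symm
  · simp [σv]
  · simp [σv]
  · exact fun he => hbnex (Sum.inl_injective he)

lemma children_eq (hf : ∀ a, ∃ k, (fun o => Option.bind o f)^[k] (some a) = none)
    (hinj : Function.Injective ι) {b x : A} (hb : f b ≠ none) (hbx : f b = some x) :
    {u : Vt f | par f ι u = some (Sum.inr ⟨b, hb⟩ : Vt f)} = {brt f ι b, sc f ι b x} := by
  apply Set.eq_of_subset_of_subset
  · rintro u hu
    simp only [Set.mem_setOf_eq] at hu
    match u with
    | Sum.inl c =>
      rw [par] at hu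
      split_ifs at hu with h1 h2
      · simp only [σv, Option.some_inj, Sum.inr.injEq, Subtype.mk.injEq] at hu
        have hpm : f b = some c := hu ▸ (pmax_mem ι h1 : f (pmax ι h1) = some c)
        have hcx : c = x := by rw [hpm] at hbx; exact Option.some_inj.mp hbx
        subst hcx
        have hsiba : ¬ (siba f ι b c).Nonempty := by
          rintro ⟨d, hd1, hd2⟩
          have := pmax_max ι h1 d hd1
          rw [hu] at this
          omega
        right
        rw [sc, dif_neg hsiba]
        exact rfl
      · simp only [σv, Option.some_inj, Sum.inr.injEq, Subtype.mk.injEq] at hu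
        subst hu
        left
        rw [brt, dif_neg h1]
    | Sum.inr ⟨c, hc⟩ =>
      have hcy : f c = some (fval f c hc) := f_fval hc
      rw [par] at hu
      split_ifs at hu with h1 h2
      · simp only [σv, Option.some_inj, Sum.inr.injEq, Subtype.mk.injEq] at hu
        have hbm : b ∈ sib f ι c (fval f c hc) := hu ▸ pmax_mem ι h1
        obtain ⟨hbm1, hbm2⟩ := hbm
        have hyx : fval f c hc = x := by rw [hbm1] at hbx; exact Option.some_inj.mp hbx
        rw [hyx] at hcy
        have hsa : (siba f ι b x).Nonempty := ⟨c, hcy, hbm2⟩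
        right
        rw [sc, dif_pos hsa]
        have hcpm : c = pmin ι hsa := by
          have h1' : ι (pmin ι hsa) ≤ ι c := pmin_min ι hsa c ⟨hcy, hbm2⟩
          have h2' : ι c ≤ ι (pmin ι hsa) := by
            by_contra hlt
            push_neg at hlt
            have hmem : pmin ι hsa ∈ sib f ι c x := ⟨(pmin_mem ι hsa).1, hlt⟩
            have := pmax_max ι h1 _ (by rwa [hyx])
            rw [hu] at this
            have := (pmin_mem ι hsa).2
            omega
          exact hinj (le_antisymm h2' h1')
        simp only [σv]
        congr 1
        exact Subtype.ext hcpm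
      · simp only [σv, Option.some_inj, Sum.inr.injEq, Subtype.mk.injEq] at hu
        rw [hu] at hcy
        have hch : (chS f b).Nonempty := ⟨c, hcy⟩
        left
        rw [brt, dif_pos hch]
        have hcpm : c = pmin ι hch := by
          have h1' : ι (pmin ι hch) ≤ ι c := pmin_min ι hch c hcy
          have h2' : ι c ≤ ι (pmin ι hch) := by
            by_contra hlt
            push_neg at hlt
            exact h1 ⟨pmin ι hch, by rw [hu]; exact pmin_mem ι hch, hlt⟩
          exact hinj (le_antisymm h2' h1')
        simp only [σv]
        congr 1
        exact Subtype.ext hcpm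
  · rintro u (rfl | rfl)
    · exact brt_par hb
    · exact sc_par hinj hb hbx

end Binary

section Build
variable (f : A → Option A) (ι : A → ℕ)

/-- the caterpillar-expansion phylogenetic tree -/
def mkT (hf2 : ∀ a, ∃ k, (fun o => Option.bind o f)^[k] (some a) = none)
    (hι : ∀ b, ι b < Fintype.card A) (hinj : Function.Injective ι)
    (r : A) (hr : f r = none) (hrU : ∀ b, f b = none → b = r)
    (hchr : (chS f r).Nonempty) : PhyloTree (Vt f) A where
  parent := par f ι
  root := σv f (pmin ι hchr) (mem_chS_ne_none (pmin_mem ι hchr))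
  depth := dep f (hgt f) ι
  parent_root := by
    have hm : f (pmin ι hchr) = some r := pmin_mem ι hchr
    have hsib : ¬ (sib f ι (pmin ι hchr) r).Nonempty := by
      rintro ⟨c, hc1, hc2⟩
      exact absurd (pmin_min ι hchr c hc1) (not_le.mpr hc2)
    exact par_inr_root _ hm hsib hr
  root_unique := by
    intro v hv
    match v with
    | Sum.inl b =>
      rw [par] at hv
      split_ifs at hv with h1 h2
      exact absurd hchr (by rwa [hrU b h2] at h1)
    | Sum.inr ⟨b, hb⟩ =>
      rw [par] at hv
      split_ifs at hv with h1 h2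
      have hfv : fval f b hb = r := hrU _ h2
      have hbr : f b = some r := by rw [← hfv]; exact f_fval hb
      have hbm : b = pmin ι hchr := by
        have h1' : ι (pmin ι hchr) ≤ ι b := pmin_min ι hchr b hbr
        have h2' : ι b ≤ ι (pmin ι hchr) := by
          by_contra hlt
          push_neg at hlt
          apply h1
          refine ⟨pmin ι hchr, ?_, hlt⟩
          rw [hfv]
          exact pmin_mem ι hchr
        exact hinj (le_antisymm h2' h1')
      simp only [σv]
      congr 1
      exact Subtype.ext hbm
  depth_lt := fun _ _ h => dep_lt hf2 hι h
  tip := Sum.inl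
  tip_inj := fun _ _ h => Sum.inl_injective h
  tip_no_child := by
    intro a u h
    match u with
    | Sum.inl b =>
      rw [par] at h
      split_ifs at h <;> simp [σv] at h
    | Sum.inr ⟨b, hb⟩ =>
      rw [par] at h
      split_ifs at h <;> simp [σv] at h
  binary := by
    intro v hv
    match v with
    | Sum.inl b => exact absurd ⟨b, rfl⟩ hv
    | Sum.inr ⟨b, hb⟩ =>
      have : {u : Vt f | par f ι u = some (Sum.inr ⟨b, hb⟩ : Vt f)} =
          {brt f ι b, sc f ι b (fval f b hb)} :=
        children_eq hf2 hinj hb (f_fval hb)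
      rw [this]
      exact Set.ncard_pair (brt_ne_sc hf2 (f_fval hb))

/-- the tip-partition on the caterpillar-expansion tree -/
def mkP (hf2 : ∀ a, ∃ k, (fun o => Option.bind o f)^[k] (some a) = none)
    (hι : ∀ b, ι b < Fintype.card A) (hinj : Function.Injective ι)
    (r : A) (hr : f r = none) (hrU : ∀ b, f b = none → b = r)
    (hchr : (chS f r).Nonempty) :
    TipPartition (mkT f ι hf2 hι hinj r hr hrU hchr) where
  δ := lab f
  δ_tip := fun _ => rfl
  blockRoot := brt f ι
  blockRoot_label := lab_brt
  blockRoot_anc := brt_anc hinj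
  block_connected := fun u w h1 h2 => block_connected' hf2 hι hinj h1 u rfl h2

lemma infector_eq (a : A) : (par f ι (brt f ι a)).map (lab f) = f a := by
  by_cases h : f a = none
  · rw [brt]
    split_ifs with hch
    · have hm : f (pmin ι hch) = some a := pmin_mem ι hch
      have hsib : ¬ (sib f ι (pmin ι hch) a).Nonempty := by
        rintro ⟨c, hc1, hc2⟩
        exact absurd (pmin_min ι hch c hc1) (not_le.mpr hc2)
      simp only [σv]
      rw [par_inr_root _ hm hsib h]
      simp [h]
    · rw [par_inl_root hch h]
      simp [h]
  · rw [brt_par h]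
    simp only [Option.map_some]
    simp only [lab]
    exact (f_fval h).symm

end Build

section Core
variable {f : A → Option A} {ι : A → ℕ}

/-- the spine node of `b` is an ancestor of the tip of `b` -/
lemma sigma_anc_tip (hinj : Function.Injective ι) {b : A} (hb : f b ≠ none) :
    ancp f ι (Sum.inr ⟨b, hb⟩ : Vt f) (Sum.inl b) := by
  have h1 : ancp f ι (brt f ι b) (Sum.inl b) := brt_anc hinj (Sum.inl b)
  exact Relation.ReflTransGen.tail h1 (brt_par hb)

/-- the only `a`-labelled ancestor of the top spine node of `a` is itself -/
lemma unique_anc_sigma (hf2 : ∀ a, ∃ k, (fun o => Option.bind o f)^[k] (some a) = none)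
    {a : A} (hcha : (chS f a).Nonempty)
    {u : Vt f} (hu : lab f u = a)
    (h : ancp f ι u (Sum.inr ⟨pmin ι hcha, mem_chS_ne_none (pmin_mem ι hcha)⟩ : Vt f)) :
    u = (Sum.inr ⟨pmin ι hcha, mem_chS_ne_none (pmin_mem ι hcha)⟩ : Vt f) := by
  set s1 : Vt f := Sum.inr ⟨pmin ι hcha, mem_chS_ne_none (pmin_mem ι hcha)⟩ with hs1
  by_cases he : s1 = u
  · exact he.symm
  · exfalso
    rcases Relation.ReflTransGen.cases_head h with h' | ⟨c, hc1, hc2⟩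
    · exact he h'
    · have hm : f (pmin ι hcha) = some a := pmin_mem ι hcha
      have hsib : ¬ (sib f ι (pmin ι hcha) a).Nonempty := by
        rintro ⟨d, hd1, hd2⟩
        exact absurd (pmin_min ι hcha d hd1) (not_le.mpr hd2)
      by_cases hfa : f a = none
      · rw [hs1, par_inr_root _ hm hsib hfa] at hc1
        simp at hc1
      · rw [hs1, par_inr_neg _ hm hsib hfa] at hc1
        rw [Option.some_inj] at hc1
        subst hc1
        have hl := lab_anc (ι := ι) hc2
        rw [hu] at hl
        simp only [σv, lab] at hl
        exact not_ancf_child hf2 (f_fval hfa) hl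
  
/-- the only `a`-labelled ancestor of the tip of the first child of `a` is the
spine node of that child -/
lemma unique_anc_tip (hf2 : ∀ a, ∃ k, (fun o => Option.bind o f)^[k] (some a) = none)
    (hι : ∀ b, ι b < Fintype.card A) (hinj : Function.Injective ι)
    {a : A} (hcha : (chS f a).Nonempty)
    {u : Vt f} (hu : lab f u = a)
    (h : ancp f ι u (Sum.inl (pmin ι hcha))) :
    u = (Sum.inr ⟨pmin ι hcha, mem_chS_ne_none (pmin_mem ι hcha)⟩ : Vt f) := by
  set b1 := pmin ι hcha with hb1def
  have hb1 : f b1 = some a := pmin_mem ι hcha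
  set s1 : Vt f := Sum.inr ⟨b1, mem_chS_ne_none (pmin_mem ι hcha)⟩ with hs1
  have h1 : ancp f ι s1 (Sum.inl b1) := sigma_anc_tip hinj _
  rcases anc_total h h1 with hl | hr
  · exact unique_anc_sigma hf2 hcha hu hl
  · by_cases he : u = s1
    · exact he
    · exfalso
      rcases Relation.ReflTransGen.cases_tail hr with h' | ⟨c, hc1, hc2⟩
      · exact he h'.symm
      · -- c is a child of s1 and an ancestor of the tip of b1
        have hcu : ancp f ι c u := hc1
        have hctip : ancp f ι c (Sum.inl b1) := ancp_trans hcu h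
        have hrb_par : par f ι (brt f ι b1) = some s1 := brt_par _
        have hrb_anc : ancp f ι (brt f ι b1) (Sum.inl b1) := brt_anc hinj (Sum.inl b1)
        have hceq : c = brt f ι b1 := by
          by_contra hne
          rcases anc_total hctip hrb_anc with hx | hx
          · exact anc_sibling hf2 hι hc2 hrb_par hne hx
          · exact anc_sibling hf2 hι hrb_par hc2 (Ne.symm hne) hx
        subst hceq
        have hl := lab_anc (ι := ι) hcu
        rw [hu, lab_brt] at hl
        exact not_ancf_child hf2 hb1 hl

/-- reaching `none` from anywhere forces the root to have a child -/
lemma chr_nonempty (hf2 : ∀ a, ∃ k, (fun o => Option.bind o f)^[k] (some a) = none)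
    {r : A} (hrU : ∀ b, f b = none → b = r) {b : A} (hb : f b ≠ none) :
    (chS f r).Nonempty := by
  suffices key : ∀ (k : ℕ) (b : A), f b ≠ none →
      (fun o => Option.bind o f)^[k] (some b) = none → (chS f r).Nonempty by
    obtain ⟨k, hk⟩ := hf2 b
    exact key k b hb hk
  intro k
  induction k with
  | zero => intro b _ hk; simp at hk
  | succ k ih =>
    intro b hb hk
    rw [Function.iterate_succ_apply] at hk
    have hc : f b = some (fval f b hb) := f_fval hb
    simp only [Option.bind_eq_bind, Option.bind_some] at hk
    rw [hc] at hk
    by_cases h2 : f (fval f b hb) = none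
    · refine ⟨b, ?_⟩
      rw [mem_chS, hc, hrU _ h2]
    · exact ih (fval f b hb) h2 hk

end Core
end AuxZ

/-- `Z` is not injective when some host of the transmission tree `f` has at
least two children: there are two partitioned phylogenies, non-isomorphic as
labelled partitioned trees, that both map to `f` under `Z`. -/
theorem Z_not_injective {A : Type} [Fintype A] (f : A → Option A)
    (hf : IsTransmissionTree f) (a : A)
    (ha : 2 ≤ {b : A | f b = some a}.ncard) :
    ∃ (V : Type) (T T' : PhyloTree V A) (P : TipPartition T) (P' : TipPartition T'),
      infector T P = f ∧ infector T' P' = f ∧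
      ¬ ∃ φ : V ≃ V,
          (∀ v : V, T'.parent (φ v) = (T.parent v).map φ) ∧
          φ T.root = T'.root ∧
          (∀ b : A, φ (T.tip b) = T'.tip b) ∧
          (∀ v : V, P'.δ (φ v) = P.δ v) := by
  classical
  obtain ⟨⟨r, hr, hrU⟩, hf2⟩ := hf
  -- two distinct children of a
  have hfin : {b : A | f b = some a}.Finite := Set.toFinite _
  obtain ⟨c1, c2, hc1, hc2, hc12⟩ := (Set.one_lt_ncard_iff hfin).mp (by omega)
  -- the child orderings
  set ι : A → ℕ := fun b => ((Fintype.equivFin A) b : ℕ) with hιdef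
  have hinj : Function.Injective ι :=
    fun x y h => (Fintype.equivFin A).injective (Fin.val_injective h)
  have hι : ∀ b, ι b < Fintype.card A := fun b => ((Fintype.equivFin A) b).2
  have hcha : (chS f a).Nonempty := ⟨c1, hc1⟩
  set b1 := pmin ι hcha with hb1def
  have hb1 : f b1 = some a := pmin_mem ι hcha
  obtain ⟨b2, hb2, hb21⟩ : ∃ b2, f b2 = some a ∧ b2 ≠ b1 := by
    rcases eq_or_ne c1 b1 with h | h
    · exact ⟨c2, hc2, fun he => hc12 (by rw [h, he])⟩
    · exact ⟨c1, hc1, h⟩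
  set ι' : A → ℕ := ι ∘ (Equiv.swap b1 b2) with hι'def
  have hinj' : Function.Injective ι' := hinj.comp (Equiv.swap b1 b2).injective
  have hι' : ∀ b, ι' b < Fintype.card A := fun b => hι _
  have hchr : (chS f r).Nonempty :=
    chr_nonempty hf2 (fun b hb => hrU b hb) (mem_chS_ne_none hb1)
  -- the two partitioned phylogenies
  refine ⟨Vt f, mkT f ι hf2 hι hinj r hr (fun b hb => hrU b hb) hchr,
    mkT f ι' hf2 hι' hinj' r hr (fun b hb => hrU b hb) hchr,
    mkP f ι hf2 hι hinj r hr (fun b hb => hrU b hb) hchr,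
    mkP f ι' hf2 hι' hinj' r hr (fun b hb => hrU b hb) hchr,
    funext (fun x => infector_eq f ι x), funext (fun x => infector_eq f ι' x), ?_⟩
  rintro ⟨φ, hpar, -, htip, hδ⟩
  simp only [mkT] at hpar htip
  simp only [mkP] at hδ
  -- b2 is the ι'-least child of a
  have hswap : ∀ c, f c = some a → f ((Equiv.swap b1 b2) c) = some a := by
    intro c hc
    rcases eq_or_ne c b1 with h | h
    · subst h; rw [Equiv.swap_apply_left]; exact hb2
    · rcases eq_or_ne c b2 with h2 | h2
      · subst h2; rw [Equiv.swap_apply_right]; exact hb1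
      · rw [Equiv.swap_apply_of_ne_of_ne h h2]; exact hc
  have hb2min : pmin ι' hcha = b2 := by
    have m1 : ι' (pmin ι' hcha) ≤ ι' b2 := pmin_min ι' hcha b2 hb2
    have m2 : ι' b2 ≤ ι' (pmin ι' hcha) := by
      have : ι' b2 = ι b1 := by rw [hι'def]; simp [Equiv.swap_apply_right]
      rw [this]
      exact pmin_min ι hcha _ (hswap _ (pmin_mem ι' hcha))
    exact hinj' (le_antisymm m1 m2)
  set s1 : Vt f := Sum.inr ⟨b1, mem_chS_ne_none hb1⟩ with hs1
  set s2 : Vt f := Sum.inr ⟨b2, mem_chS_ne_none hb2⟩ with hs2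
  have hs12 : s1 ≠ s2 := by
    rw [hs1, hs2]
    intro h
    exact hb21 (Subtype.ext_iff.mp (Sum.inr_injective h)).symm
  -- ancestry facts in T'
  have hA1 : ancp f ι' s1 (Sum.inl b1) := sigma_anc_tip hinj' _
  have hA2 : ancp f ι' s2 (Sum.inl b1) := by
    have sp := spine_anc (ι := ι') hinj' hcha b1 hb1
    have he : (σv f (pmin ι' hcha) (mem_chS_ne_none (pmin_mem ι' hcha)) : Vt f) = s2 := by
      simp only [σv, hs2]
      congr 1
      exact Subtype.ext hb2min
    rw [he] at sp
    have : (σv f b1 (mem_chS_ne_none hb1) : Vt f) = s1 := rfl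
    rw [this] at sp
    exact ancp_trans sp hA1
  -- transport along the isomorphism
  have hpar' : ∀ w, par f ι (φ.symm w) = (par f ι' w).map φ.symm := by
    intro w
    have h := hpar (φ.symm w)
    rw [Equiv.apply_symm_apply] at h
    rw [h, Option.map_map]
    simp
  have htrans : ∀ u v : Vt f, ancp f ι' u v → ancp f ι (φ.symm u) (φ.symm v) := by
    intro u v h
    exact Relation.ReflTransGen.lift (r := fun x y => par f ι' x = some y)
      (p := fun x y => par f ι x = some y) φ.symm
      (fun x y hxy => by show par f ι (φ.symm x) = some (φ.symm y); rw [hpar' x, hxy]; rfl) _ _ h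
  have hδ' : ∀ w : Vt f, lab f (φ.symm w) = lab f w := by
    intro w
    have h := hδ (φ.symm w)
    rw [Equiv.apply_symm_apply] at h
    exact h.symm
  have htip1 : φ.symm (Sum.inl b1) = Sum.inl b1 := by
    exact (Equiv.symm_apply_eq φ).mpr (htip b1).symm
  have key : ∀ w : Vt f, lab f w = a → ancp f ι' w (Sum.inl b1) →
      φ.symm w = (Sum.inr ⟨b1, mem_chS_ne_none (pmin_mem ι hcha)⟩ : Vt f) := by
    intro w hw hanc
    have h1 := htrans w (Sum.inl b1) hanc
    rw [htip1] at h1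
    exact unique_anc_tip hf2 hι hinj hcha (by rw [hδ' w, hw]) h1
  have e1 := key s1 (show lab f s1 = a from fval_eq (mem_chS_ne_none hb1) hb1) hA1
  have e2 := key s2 (show lab f s2 = a from fval_eq (mem_chS_ne_none hb2) hb2) hA2
  exact hs12 (φ.symm.injective (e1.trans e2.symm))
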